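/- With Q having the SBP boundary structure Q = -e_L p_Lᵀ + e_R p_Rᵀ, the energy rate for the penalized system equals E'(t) = (σ_L + 1)(Vᵀ p_L)(e_Lᵀ P) + (σ_R − 1)(Vᵀ p_R)(e_Rᵀ P). -/

import Mathlib

open Matrix

private lemma quad_deriv' {n : ℕ} (A : Matrix (Fin n) (Fin n) ℝ)
    (P : ℝ → Fin n → ℝ) (P' : ℝ → Fin n → ℝ) (t : ℝ)
    (hP : HasDerivAt P (P' t) t) :
    HasDerivAt (fun s => P s ⬝ᵥ A.mulVec (P s))
      (P' t ⬝ᵥ A.mulVec (P t) + P t ⬝ᵥ A.mulVec (P' t)) t := by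
  have hcoord : ∀ i, HasDerivAt (fun s => P s i) (P' t i) t := (hasDerivAt_pi.mp hP)
  simp only [dotProduct, mulVec]
  rw [← Finset.sum_add_distrib]
  apply HasDerivAt.fun_sum
  intro i _
  have hinner : HasDerivAt (fun s => ∑ j, A i j * P s j) (∑ j, A i j * P' t j) t :=
    HasDerivAt.fun_sum fun j _ => (hcoord j).const_mul _
  exact (hcoord i).mul hinner

private lemma symm_swap {n : ℕ} {A : Matrix (Fin n) (Fin n) ℝ} (h : Aᵀ = A)
    (x y : Fin n → ℝ) : x ⬝ᵥ A.mulVec y = y ⬝ᵥ A.mulVec x := by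
  rw [dotProduct_mulVec, ← mulVec_transpose, h, dotProduct_comm]

/-- Energy rate for the SAT-penalized 1D boundary system with general penalties. -/
theorem stmt3 {NP NV : ℕ}
    (AP : Matrix (Fin (NP + 1)) (Fin (NP + 1)) ℝ) (AV : Matrix (Fin NV) (Fin NV) ℝ)
    (DV : Matrix (Fin (NP + 1)) (Fin NV) ℝ) (DP : Matrix (Fin NV) (Fin (NP + 1)) ℝ)
    (hAP : AP.PosDef) (hAV : AV.PosDef)
    (pL pR : Fin NV → ℝ)
    (eL eR : Fin (NP + 1) → ℝ)
    (heL : eL = Pi.single 0 1) (heR : eR = Pi.single (Fin.last NP) 1)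
    (hQ : AP * DV + (AV * DP)ᵀ = -vecMulVec eL pL + vecMulVec eR pR)
    (σL σR : ℝ)
    (P : ℝ → Fin (NP + 1) → ℝ) (V : ℝ → Fin NV → ℝ)
    (P' : ℝ → Fin (NP + 1) → ℝ) (V' : ℝ → Fin NV → ℝ)
    (hP : ∀ t, HasDerivAt P (P' t) t) (hV : ∀ t, HasDerivAt V (V' t) t)
    (hPode : ∀ t, AP.mulVec (P' t) = -((AP * DV).mulVec (V t)))
    (hVode : ∀ t, AV.mulVec (V' t) =
      -((AV * DP).mulVec (P t)) + (σL * (eL ⬝ᵥ P t)) • pL + (σR * (eR ⬝ᵥ P t)) • pR)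
    (t : ℝ) :
    HasDerivAt
      (fun s => (1/2) * (P s ⬝ᵥ AP.mulVec (P s)) + (1/2) * (V s ⬝ᵥ AV.mulVec (V s)))
      ((σL + 1) * (V t ⬝ᵥ pL) * (eL ⬝ᵥ P t) + (σR - 1) * (V t ⬝ᵥ pR) * (eR ⬝ᵥ P t)) t := by
  have hAPsymm : APᵀ = AP := by
    have h := hAP.isHermitian
    exact (by simpa [conjTranspose, Matrix.map_id] using h : AP.IsSymm)
  have hAVsymm : AVᵀ = AV := by
    have h := hAV.isHermitian
    exact (by simpa [conjTranspose, Matrix.map_id] using h : AV.IsSymm)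
  have hD := ((quad_deriv' AP P P' t (hP t)).const_mul ((1:ℝ)/2)).add
    ((quad_deriv' AV V V' t (hV t)).const_mul ((1:ℝ)/2))
  refine hD.congr_deriv (Eq.symm ?_)
  rw [symm_swap hAPsymm (P' t) (P t), symm_swap hAVsymm (V' t) (V t)]
  rw [hPode t, hVode t]
  have hswap : V t ⬝ᵥ (AV * DP).mulVec (P t) = P t ⬝ᵥ (AV * DP)ᵀ.mulVec (V t) := by
    rw [dotProduct_mulVec, ← mulVec_transpose, dotProduct_comm]
  have hQapp : P t ⬝ᵥ (AP * DV).mulVec (V t) + P t ⬝ᵥ (AV * DP)ᵀ.mulVec (V t)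
      = -((eL ⬝ᵥ P t) * (pL ⬝ᵥ V t)) + (eR ⬝ᵥ P t) * (pR ⬝ᵥ V t) := by
    rw [← dotProduct_add, ← add_mulVec, hQ]
    have hL : (vecMulVec eL pL).mulVec (V t) = (pL ⬝ᵥ V t) • eL := by
      ext i
      simp only [vecMulVec_apply, mulVec, dotProduct, Pi.smul_apply, smul_eq_mul,
        Finset.sum_mul]
      exact Finset.sum_congr rfl fun x _ => by ring
    have hR : (vecMulVec eR pR).mulVec (V t) = (pR ⬝ᵥ V t) • eR := by
      ext i
      simp only [vecMulVec_apply, mulVec, dotProduct, Pi.smul_apply, smul_eq_mul,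
        Finset.sum_mul]
      exact Finset.sum_congr rfl fun x _ => by ring
    rw [add_mulVec, neg_mulVec, hL, hR]
    simp only [dotProduct_neg, dotProduct_add, dotProduct_smul, smul_eq_mul]
    rw [dotProduct_comm (P t) eL, dotProduct_comm (P t) eR]
    ring
  rw [← hswap] at hQapp
  simp only [dotProduct_neg, dotProduct_add, dotProduct_smul, smul_eq_mul]
  rw [dotProduct_comm (V t) pL, dotProduct_comm (V t) pR]
  linear_combination hQapp
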